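/- There exists n₀ such that for every n ≥ n₀ there exist a 3-uniform hypergraph T with exactly 10n vertices and exactly 120n hyperedges, and a set Z of 2n vertices of T, such that for every subset Z′ ⊆ Z with |Z′| = n, the hyperedges of T that avoid Z′ contain a perfect matching of V(T) ∖ Z′, i.e., a collection of 3n pairwise disjoint hyperedges of T covering all 9n vertices of V(T) ∖ Z′. -/

import Mathlib

open Finset

namespace RT
variable (n : ℕ)

abbrev F := Fin (3*n) × Fin 33 → Fin (2*n)
abbrev G := Fin (2*n) × Fin 10 → Fin n
abbrev Om := F n × G n

def adj (ω : Om n) (ℓ : Fin (3*n)) (r : Fin (2*n)) : Prop :=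
  (∃ k, ω.1 (ℓ, k) = r) ∨ (∃ k, (ℓ : ℕ) = 2*n + (ω.2 (r, k) : ℕ))

instance (ω : Om n) (ℓ : Fin (3*n)) (r : Fin (2*n)) : Decidable (adj n ω ℓ r) := by
  unfold adj; infer_instance

def nbr (ω : Om n) (S : Finset (Fin (3*n))) : Finset (Fin (2*n)) :=
  univ.filter (fun r => ∃ ℓ ∈ S, adj n ω ℓ r)

def Good (ω : Om n) : Prop :=
  ∀ S : Finset (Fin (3*n)), (S.filter (fun ℓ : Fin (3*n) => (ℓ:ℕ) < 2*n)).card ≤ n →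
    S.card ≤ (nbr n ω S).card

lemma card_filter_fst {α β : Type*} [Fintype α] [Fintype β] (p : α → Prop) [DecidablePred p] :
    (univ.filter (fun x : α × β => p x.1)).card = (univ.filter p).card * Fintype.card β := by
  rw [← Fintype.card_subtype, ← Fintype.card_subtype]
  rw [Fintype.card_congr (Equiv.prodSubtypeFstEquivSubtypeProd (p := p))]
  rw [Fintype.card_prod]

lemma card_filter_snd {α β : Type*} [Fintype α] [Fintype β] (p : β → Prop) [DecidablePred p] :
    (univ.filter (fun x : α × β => p x.2)).card = Fintype.card α * (univ.filter p).card := by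
  rw [← Fintype.card_subtype, ← Fintype.card_subtype]
  have e : {x : α × β // p x.2} ≃ {b // p b} × α :=
    (Equiv.prodComm α β).subtypeEquiv (fun x => Iff.rfl) |>.trans
      (Equiv.prodSubtypeFstEquivSubtypeProd (p := p))
  rw [Fintype.card_congr e, Fintype.card_prod]
  ring

lemma card_filter_pi {σ γ : Type*} [Fintype σ] [DecidableEq σ] [Fintype γ] [DecidableEq γ]
    (A : Finset σ) (T : Finset γ) :
    (univ.filter (fun h : σ → γ => ∀ a ∈ A, h a ∈ T)).card
      = T.card ^ A.card * (Fintype.card γ) ^ (Fintype.card σ - A.card) := by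
  have : univ.filter (fun h : σ → γ => ∀ a ∈ A, h a ∈ T)
      = Fintype.piFinset (fun a => if a ∈ A then T else univ) := by
    ext h
    simp only [mem_filter, mem_univ, true_and, Fintype.mem_piFinset]
    constructor
    · intro hh a
      by_cases ha : a ∈ A <;> simp [ha, hh]
    · intro hh a ha
      have := hh a
      simpa [ha] using this
  rw [this, Fintype.card_piFinset]
  rw [← Finset.prod_filter_mul_prod_filter_not univ (· ∈ A)]
  have h1 : univ.filter (· ∈ A) = A := by ext a; simp
  have h2 : (univ.filter (¬ · ∈ A)).card = Fintype.card σ - A.card := by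
    rw [Finset.filter_not, Finset.card_sdiff_of_subset (by simp [h1])]
    simp [h1, Finset.card_univ]
  calc (∏ a ∈ univ.filter (· ∈ A), (if a ∈ A then T else univ).card) *
        ∏ a ∈ univ.filter (¬ · ∈ A), (if a ∈ A then T else univ).card
      = (∏ a ∈ univ.filter (· ∈ A), T.card) *
        ∏ a ∈ univ.filter (¬ · ∈ A), (univ : Finset γ).card := by
        congr 1
        · exact Finset.prod_congr rfl (fun a ha => by simp at ha; simp [ha])
        · exact Finset.prod_congr rfl (fun a ha => by simp at ha; simp [ha])
    _ = T.card ^ A.card * (Fintype.card γ) ^ (Fintype.card σ - A.card) := by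
        rw [Finset.prod_const, Finset.prod_const, h1, h2, Finset.card_univ]


def E1 (B : Finset (Fin (2*n))) (W : Finset (Fin n)) : Finset (Om n) :=
  univ.filter (fun ω => ∀ p ∈ B ×ˢ (univ : Finset (Fin 10)), ω.2 p ∈ W)

def E2 (A : Finset (Fin (3*n))) (B : Finset (Fin (2*n))) : Finset (Om n) :=
  univ.filter (fun ω => ∀ p ∈ A ×ˢ (univ : Finset (Fin 33)), ω.1 p ∈ Bᶜ)

lemma card_E1 (B : Finset (Fin (2*n))) (W : Finset (Fin n)) :
    (E1 n B W).card = (2*n)^(99*n) * (W.card ^ (10 * B.card) * n ^ (20*n - 10*B.card)) := by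
  rw [E1, card_filter_snd (p := fun g : G n => ∀ p ∈ B ×ˢ (univ : Finset (Fin 10)), g p ∈ W), card_filter_pi]
  have h1 : Fintype.card (F n) = (2*n)^(99*n) := by
    rw [Fintype.card_fun, Fintype.card_prod, Fintype.card_fin, Fintype.card_fin, Fintype.card_fin]
    congr 1; ring
  have h2 : (B ×ˢ (univ : Finset (Fin 10))).card = 10 * B.card := by
    rw [Finset.card_product, Finset.card_univ, Fintype.card_fin]; ring
  have h3 : Fintype.card (Fin (2*n) × Fin 10) = 20 * n := by
    rw [Fintype.card_prod, Fintype.card_fin, Fintype.card_fin]; ring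
  rw [h1, h2, h3, Fintype.card_fin]

lemma card_E2 (A : Finset (Fin (3*n))) (B : Finset (Fin (2*n))) :
    (E2 n A B).card = ((2*n - B.card) ^ (33 * A.card) * (2*n) ^ (99*n - 33*A.card)) * n^(20*n) := by
  rw [E2, card_filter_fst (p := fun f : F n => ∀ p ∈ A ×ˢ (univ : Finset (Fin 33)), f p ∈ Bᶜ), card_filter_pi]
  have h1 : Fintype.card (G n) = n^(20*n) := by
    rw [Fintype.card_fun, Fintype.card_prod, Fintype.card_fin, Fintype.card_fin, Fintype.card_fin]
    congr 1; ring
  have h2 : (A ×ˢ (univ : Finset (Fin 33))).card = 33 * A.card := by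
    rw [Finset.card_product, Finset.card_univ, Fintype.card_fin]; ring
  have h3 : Fintype.card (Fin (3*n) × Fin 33) = 99 * n := by
    rw [Fintype.card_prod, Fintype.card_fin, Fintype.card_fin]; ring
  have h4 : (Bᶜ : Finset (Fin (2*n))).card = 2*n - B.card := by
    rw [Finset.card_compl, Fintype.card_fin]
  rw [h1, h2, h3, h4, Fintype.card_fin]



def Bad : Finset (Om n) := univ.filter (fun ω =>
  ∃ S : Finset (Fin (3*n)), (S.filter (fun ℓ : Fin (3*n) => (ℓ:ℕ) < 2*n)).card ≤ n ∧
    (nbr n ω S).card < S.card)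

def Bad1 : Finset (Om n) := (Finset.Icc 1 (n/2)).biUnion (fun b =>
  (powersetCard b (univ : Finset (Fin (2*n)))).biUnion (fun B =>
  (powersetCard (b-1) (univ : Finset (Fin n))).biUnion (fun W => E1 n B W)))

def Bad2 : Finset (Om n) := (Finset.Icc ((n+2)/2) (2*n)).biUnion (fun b =>
  (powersetCard b (univ : Finset (Fin (2*n)))).biUnion (fun B =>
  (powersetCard (2*n+1-b) (univ : Finset (Fin (3*n)))).biUnion (fun A => E2 n A B)))

lemma card_filter_val_lt (N m : ℕ) (h : m ≤ N) :
    ((univ : Finset (Fin N)).filter (fun v : Fin N => (v:ℕ) < m)).card = m := by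
  have : (univ : Finset (Fin N)).filter (fun v : Fin N => (v:ℕ) < m)
      = (univ : Finset (Fin m)).map (Fin.castLEEmb h) := by
    ext v
    simp only [mem_filter, mem_univ, true_and, mem_map]
    constructor
    · intro hv
      exact ⟨⟨(v:ℕ), hv⟩, by ext; simp [Fin.castLEEmb, Fin.castLE]⟩
    · rintro ⟨i, _, rfl⟩; simpa [Fin.castLEEmb, Fin.castLE] using i.isLt
  rw [this, Finset.card_map, Finset.card_univ, Fintype.card_fin]

lemma Bad_subset : Bad n ⊆ Bad1 n ∪ Bad2 n := by
  intro ω hω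
  rw [Bad, mem_filter] at hω
  obtain ⟨-, S, hSZ, hviol⟩ := hω
  -- the non-neighbour set B
  set B : Finset (Fin (2*n)) := univ.filter (fun r => ∀ ℓ ∈ S, ¬ adj n ω ℓ r) with hBdef
  have hBcompl : B = (nbr n ω S)ᶜ := by
    ext r; simp [hBdef, nbr, Finset.mem_compl]
  have hBcard : B.card = 2*n - (nbr n ω S).card := by
    rw [hBcompl, Finset.card_compl, Fintype.card_fin]
  have hnbr_le : (nbr n ω S).card ≤ 2*n := by
    have := Finset.card_le_univ (nbr n ω S); simpa using this
  -- |S| ≤ 2n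
  have hSX : (S.filter (fun ℓ : Fin (3*n) => ¬ ((ℓ:ℕ) < 2*n))).card ≤ n := by
    have hsub : S.filter (fun ℓ : Fin (3*n) => ¬ ((ℓ:ℕ) < 2*n))
        ⊆ (univ : Finset (Fin (3*n))).filter (fun ℓ : Fin (3*n) => ¬ ((ℓ:ℕ) < 2*n)) :=
      Finset.filter_subset_filter _ (Finset.subset_univ S)
    have hcard : ((univ : Finset (Fin (3*n))).filter
        (fun ℓ : Fin (3*n) => ¬ ((ℓ:ℕ) < 2*n))).card = n := by
      have h1 := Finset.card_filter_add_card_filter_not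
        (s := (univ : Finset (Fin (3*n)))) (p := fun ℓ : Fin (3*n) => (ℓ:ℕ) < 2*n)
      have h2 := card_filter_val_lt (3*n) (2*n) (by omega)
      have h3 : (univ : Finset (Fin (3*n))).card = 3*n := by simp
      omega
    exact le_trans (Finset.card_le_card hsub) (le_of_eq hcard)
  have hScard : S.card ≤ 2*n := by
    have := Finset.card_filter_add_card_filter_not
      (s := S) (p := fun ℓ : Fin (3*n) => (ℓ:ℕ) < 2*n)
    omega
  have hsum : 2*n + 1 ≤ S.card + B.card := by omega
  have hB1 : 1 ≤ B.card := by omega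
  have hBle : B.card ≤ 2*n := by
    have := Finset.card_le_univ B; simpa using this
  have hnoadj : ∀ r ∈ B, ∀ ℓ ∈ S, ¬ adj n ω ℓ r := by
    intro r hr; rw [hBdef, mem_filter] at hr; exact hr.2
  by_cases hcase : 2 * B.card ≤ n
  · -- Bad1
    refine Finset.mem_union_left _ ?_
    rw [Bad1, Finset.mem_biUnion]
    refine ⟨B.card, ?_, ?_⟩
    · rw [Finset.mem_Icc]
      constructor
      · exact hB1
      · exact (Nat.le_div_iff_mul_le (by norm_num)).2 (by omega)
    rw [Finset.mem_biUnion]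
    refine ⟨B, by rw [Finset.mem_powersetCard]; exact ⟨Finset.subset_univ _, rfl⟩, ?_⟩
    -- the picks image
    set P : Finset (Fin n) := (B ×ˢ (univ : Finset (Fin 10))).image (fun p => ω.2 p) with hPdef
    -- values version
    have hPcard : P.card ≤ B.card - 1 := by
      set SXv : Finset ℕ :=
        (S.filter (fun ℓ : Fin (3*n) => ¬ ((ℓ:ℕ) < 2*n))).image (fun ℓ : Fin (3*n) => (ℓ:ℕ)) with hSXv
      set Pv : Finset ℕ := P.image (fun i : Fin n => 2*n + (i:ℕ)) with hPv
      have hSXvcard : SXv.card = (S.filter (fun ℓ : Fin (3*n) => ¬ ((ℓ:ℕ) < 2*n))).card :=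
        Finset.card_image_of_injective _ (fun a b h => Fin.ext h)
      have hPvcard : Pv.card = P.card :=
        Finset.card_image_of_injective _ (fun a b h => Fin.ext (by omega))
      have hdisj : Disjoint SXv Pv := by
        rw [Finset.disjoint_left]
        rintro v hv1 hv2
        rw [hSXv, Finset.mem_image] at hv1
        obtain ⟨ℓ, hℓ, rfl⟩ := hv1
        rw [Finset.mem_filter] at hℓ
        rw [hPv, Finset.mem_image] at hv2
        obtain ⟨i, hi, hieq⟩ := hv2
        rw [hPdef, Finset.mem_image] at hi
        obtain ⟨⟨r, k⟩, hrk, hival⟩ := hi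
        rw [Finset.mem_product] at hrk
        exact hnoadj r hrk.1 ℓ hℓ.1 (Or.inr ⟨k, by rw [hival]; omega⟩)
      have hsubI : SXv ∪ Pv ⊆ Finset.Ico (2*n) (3*n) := by
        intro v hv
        rw [Finset.mem_union] at hv
        rw [Finset.mem_Ico]
        rcases hv with hv | hv
        · rw [hSXv, Finset.mem_image] at hv
          obtain ⟨ℓ, hℓ, rfl⟩ := hv
          rw [Finset.mem_filter] at hℓ
          exact ⟨by omega, ℓ.isLt⟩
        · rw [hPv, Finset.mem_image] at hv
          obtain ⟨i, _, rfl⟩ := hv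
          have := i.isLt; omega
      have hcards : SXv.card + Pv.card ≤ n := by
        have h1 := Finset.card_le_card hsubI
        rw [Finset.card_union_of_disjoint hdisj] at h1
        have h2 : (Finset.Ico (2*n) (3*n)).card = n := by
          rw [Nat.card_Ico]; omega
        omega
      have hSXbig : 2*n + 1 - B.card - n ≤ SXv.card := by
        have := Finset.card_filter_add_card_filter_not
          (s := S) (p := fun ℓ : Fin (3*n) => (ℓ:ℕ) < 2*n)
        omega
      omega
    obtain ⟨W, hPW, hWuniv, hWcard⟩ :=
      Finset.exists_subsuperset_card_eq (Finset.subset_univ P)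
        hPcard (by simp; omega)
    rw [Finset.mem_biUnion]
    refine ⟨W, by rw [Finset.mem_powersetCard]; exact ⟨Finset.subset_univ _, hWcard⟩, ?_⟩
    rw [E1, Finset.mem_filter]
    refine ⟨Finset.mem_univ _, ?_⟩
    intro p hp
    exact hPW (Finset.mem_image_of_mem _ hp)
  · -- Bad2
    refine Finset.mem_union_right _ ?_
    rw [Bad2, Finset.mem_biUnion]
    refine ⟨B.card, ?_, ?_⟩
    · rw [Finset.mem_Icc]
      refine ⟨?_, hBle⟩
      have h2 : (n+2)/2 ≤ B.card ↔ n + 2 ≤ 2 * B.card + 1 := by omega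
      omega
    rw [Finset.mem_biUnion]
    refine ⟨B, by rw [Finset.mem_powersetCard]; exact ⟨Finset.subset_univ _, rfl⟩, ?_⟩
    obtain ⟨A, hAS, hAcard⟩ := Finset.exists_subset_card_eq
      (s := S) (n := 2*n + 1 - B.card) (by omega)
    rw [Finset.mem_biUnion]
    refine ⟨A, by rw [Finset.mem_powersetCard]; exact ⟨Finset.subset_univ _, hAcard⟩, ?_⟩
    rw [E2, Finset.mem_filter]
    refine ⟨Finset.mem_univ _, ?_⟩
    rintro ⟨ℓ, k⟩ hp
    rw [Finset.mem_product] at hp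
    rw [Finset.mem_compl]
    intro hrB
    exact hnoadj _ hrB ℓ (hAS hp.1) (Or.inl ⟨k, rfl⟩)


lemma card_Bad1 : (Bad1 n).card ≤ ∑ b ∈ Finset.Icc 1 (n/2),
    (Nat.choose (2*n) b) * ((Nat.choose n (b-1)) *
      ((2*n)^(99*n) * ((b-1) ^ (10*b) * n ^ (20*n - 10*b)))) := by
  refine le_trans (Finset.card_biUnion_le) (Finset.sum_le_sum ?_)
  intro b _
  refine le_trans (Finset.card_biUnion_le) ?_
  have hcard : (powersetCard b (univ : Finset (Fin (2*n)))).card = Nat.choose (2*n) b := by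
    rw [Finset.card_powersetCard, Finset.card_univ, Fintype.card_fin]
  calc ∑ B ∈ powersetCard b (univ : Finset (Fin (2*n))),
        ((powersetCard (b-1) (univ : Finset (Fin n))).biUnion (fun W => E1 n B W)).card
      ≤ ∑ B ∈ powersetCard b (univ : Finset (Fin (2*n))),
        (Nat.choose n (b-1)) * ((2*n)^(99*n) * ((b-1) ^ (10*b) * n ^ (20*n - 10*b))) := by
        refine Finset.sum_le_sum ?_
        intro B hB
        rw [Finset.mem_powersetCard] at hB
        refine le_trans (Finset.card_biUnion_le) (le_of_eq ?_)
        have hW : (powersetCard (b-1) (univ : Finset (Fin n))).card = Nat.choose n (b-1) := by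
          rw [Finset.card_powersetCard, Finset.card_univ, Fintype.card_fin]
        calc ∑ W ∈ powersetCard (b-1) (univ : Finset (Fin n)), (E1 n B W).card
            = ∑ W ∈ powersetCard (b-1) (univ : Finset (Fin n)),
              ((2*n)^(99*n) * ((b-1) ^ (10*b) * n ^ (20*n - 10*b))) := by
              refine Finset.sum_congr rfl ?_
              intro W hW2
              rw [Finset.mem_powersetCard] at hW2
              rw [card_E1, hW2.2, hB.2]
          _ = (Nat.choose n (b-1)) * ((2*n)^(99*n) * ((b-1) ^ (10*b) * n ^ (20*n - 10*b))) := by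
              rw [Finset.sum_const, hW, smul_eq_mul]
    _ = (Nat.choose (2*n) b) * ((Nat.choose n (b-1)) *
          ((2*n)^(99*n) * ((b-1) ^ (10*b) * n ^ (20*n - 10*b)))) := by
        rw [Finset.sum_const, hcard, smul_eq_mul]

lemma card_Bad2 : (Bad2 n).card ≤ ∑ b ∈ Finset.Icc ((n+2)/2) (2*n),
    (Nat.choose (2*n) b) * ((Nat.choose (3*n) (2*n+1-b)) *
      (((2*n - b) ^ (33 * (2*n+1-b)) * (2*n) ^ (99*n - 33*(2*n+1-b))) * n^(20*n))) := by
  refine le_trans (Finset.card_biUnion_le) (Finset.sum_le_sum ?_)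
  intro b _
  refine le_trans (Finset.card_biUnion_le) ?_
  have hcard : (powersetCard b (univ : Finset (Fin (2*n)))).card = Nat.choose (2*n) b := by
    rw [Finset.card_powersetCard, Finset.card_univ, Fintype.card_fin]
  calc ∑ B ∈ powersetCard b (univ : Finset (Fin (2*n))),
        ((powersetCard (2*n+1-b) (univ : Finset (Fin (3*n)))).biUnion (fun A => E2 n A B)).card
      ≤ ∑ B ∈ powersetCard b (univ : Finset (Fin (2*n))),
        (Nat.choose (3*n) (2*n+1-b)) *
          (((2*n - b) ^ (33 * (2*n+1-b)) * (2*n) ^ (99*n - 33*(2*n+1-b))) * n^(20*n)) := by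
        refine Finset.sum_le_sum ?_
        intro B hB
        rw [Finset.mem_powersetCard] at hB
        refine le_trans (Finset.card_biUnion_le) (le_of_eq ?_)
        have hA : (powersetCard (2*n+1-b) (univ : Finset (Fin (3*n)))).card
            = Nat.choose (3*n) (2*n+1-b) := by
          rw [Finset.card_powersetCard, Finset.card_univ, Fintype.card_fin]
        calc ∑ A ∈ powersetCard (2*n+1-b) (univ : Finset (Fin (3*n))), (E2 n A B).card
            = ∑ A ∈ powersetCard (2*n+1-b) (univ : Finset (Fin (3*n))),
              (((2*n - b) ^ (33 * (2*n+1-b)) * (2*n) ^ (99*n - 33*(2*n+1-b))) * n^(20*n)) := by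
              refine Finset.sum_congr rfl ?_
              intro A hA2
              rw [Finset.mem_powersetCard] at hA2
              rw [card_E2, hA2.2, hB.2]
          _ = (Nat.choose (3*n) (2*n+1-b)) *
              (((2*n - b) ^ (33 * (2*n+1-b)) * (2*n) ^ (99*n - 33*(2*n+1-b))) * n^(20*n)) := by
              rw [Finset.sum_const, hA, smul_eq_mul]
    _ = _ := by rw [Finset.sum_const, hcard, smul_eq_mul]


lemma pow_self_le (k : ℕ) : k ^ k ≤ 4 ^ k * (Nat.factorial k) := by
  have h1 : (Nat.factorial k) * k ^ k ≤ (Nat.factorial k) * (k+1) ^ k :=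
    Nat.mul_le_mul_left _ (Nat.pow_le_pow_left (by omega) _)
  have h2 : (Nat.factorial k) * (k+1) ^ k ≤ Nat.factorial (k+k) := Nat.factorial_mul_pow_le_factorial
  have h3 : Nat.factorial (k+k) = (2*k).choose k * ((Nat.factorial k) * (Nat.factorial k)) := by
    have h := Nat.choose_mul_factorial_mul_factorial (show k ≤ 2*k by omega)
    rw [show 2*k - k = k by omega] at h
    rw [show k + k = 2*k by omega, ← h]
    ring
  have h4 : (2*k).choose k ≤ 4 ^ k := by
    calc (2*k).choose k ≤ (2*k+1).choose k := Nat.choose_mono _ (by omega)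
      _ ≤ 4 ^ k := Nat.choose_middle_le_pow k
  have : (Nat.factorial k) * k ^ k ≤ (Nat.factorial k) * (4 ^ k * (Nat.factorial k)) := by
    calc (Nat.factorial k) * k ^ k ≤ Nat.factorial (k+k) := le_trans h1 h2
      _ = (2*k).choose k * ((Nat.factorial k) * (Nat.factorial k)) := h3
      _ ≤ 4 ^ k * ((Nat.factorial k) * (Nat.factorial k)) := Nat.mul_le_mul_right _ h4
      _ = (Nat.factorial k) * (4 ^ k * (Nat.factorial k)) := by ring
  exact Nat.le_of_mul_le_mul_left this (Nat.factorial_pos k)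

lemma choose_mul_pow_le (m k : ℕ) : m.choose k * k ^ k ≤ 4 ^ k * m ^ k := by
  calc m.choose k * k ^ k ≤ m.choose k * (4 ^ k * (Nat.factorial k)) :=
        Nat.mul_le_mul_left _ (pow_self_le k)
    _ = 4 ^ k * ((Nat.factorial k) * m.choose k) := by ring
    _ = 4 ^ k * m.descFactorial k := by rw [Nat.descFactorial_eq_factorial_mul_choose]
    _ ≤ 4 ^ k * m ^ k := Nat.mul_le_mul_left _ (Nat.descFactorial_le_pow m k)

lemma T1 (n b : ℕ) (hb1 : 1 ≤ b) (hb2 : 2*b ≤ n) :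
    7^b * ((2*n).choose b * (n.choose (b-1) * (b-1)^(10*b))) ≤ n^(10*b) := by
  rcases Nat.eq_or_lt_of_le hb1 with h1 | hb2'
  · rw [← h1]; simp
  have hb : 2 ≤ b := hb2'
  -- main chain
  have h1 : (2*n).choose b * b^b ≤ 8^b * n^b := by
    calc (2*n).choose b * b^b ≤ 4^b * (2*n)^b := choose_mul_pow_le _ _
      _ = 8^b * n^b := by rw [mul_pow, ← mul_assoc, ← mul_pow]; norm_num
  have h2 : n.choose (b-1) * (b-1)^(b-1) ≤ 4^(b-1) * n^(b-1) := choose_mul_pow_le _ _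
  have h3 : (b-1)^b ≤ b^b := Nat.pow_le_pow_left (by omega) _
  have h4 : ((b-1) * 2)^(8*b+1) ≤ n^(8*b+1) := Nat.pow_le_pow_left (by omega) _
  have h5 : 7^b * 8^b * 4^(b-1) ≤ 2^(8*b+1) := by
    calc 7^b * 8^b * 4^(b-1) ≤ 7^b * 8^b * 4^b := by
          exact Nat.mul_le_mul_left _ (Nat.pow_le_pow_right (by norm_num) (by omega))
      _ = 224^b := by rw [← mul_pow, ← mul_pow]; norm_num
      _ ≤ 256^b := Nat.pow_le_pow_left (by norm_num) _
      _ = 2^(8*b) := by rw [show (256:ℕ) = 2^8 by norm_num, ← pow_mul]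
      _ ≤ 2^(8*b+1) := Nat.pow_le_pow_right (by norm_num) (by omega)
  have hsplit : (b-1)^(10*b) = (b-1)^b * ((b-1)^(b-1) * (b-1)^(8*b+1)) := by
    rw [← pow_add, ← pow_add]; congr 1; omega
  have key : (7^b * ((2*n).choose b * (n.choose (b-1) * (b-1)^(10*b))))
        * (b^b * ((b-1)^(b-1) * 2^(8*b+1)))
      ≤ n^(10*b) * (b^b * ((b-1)^(b-1) * 2^(8*b+1))) := by
    calc (7^b * ((2*n).choose b * (n.choose (b-1) * (b-1)^(10*b))))
          * (b^b * ((b-1)^(b-1) * 2^(8*b+1)))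
        = 7^b * (((2*n).choose b * b^b) * ((n.choose (b-1) * (b-1)^(b-1)) *
            ((b-1)^b * (((b-1)*2)^(8*b+1) * (b-1)^(b-1))))) := by
          rw [hsplit, mul_pow]; ring
      _ ≤ 7^b * ((8^b * n^b) * ((4^(b-1) * n^(b-1)) *
            (b^b * (n^(8*b+1) * (b-1)^(b-1))))) := by
          exact Nat.mul_le_mul_left _ (Nat.mul_le_mul h1 (Nat.mul_le_mul h2
            (Nat.mul_le_mul h3 (Nat.mul_le_mul h4 le_rfl))))
      _ = (7^b * 8^b * 4^(b-1)) * ((n^b * (n^(b-1) * n^(8*b+1))) * (b^b * (b-1)^(b-1))) := by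
          ring
      _ ≤ 2^(8*b+1) * ((n^b * (n^(b-1) * n^(8*b+1))) * (b^b * (b-1)^(b-1))) :=
          Nat.mul_le_mul h5 le_rfl
      _ = n^(10*b) * (b^b * ((b-1)^(b-1) * 2^(8*b+1))) := by
          rw [← pow_add, ← pow_add, show (b-1) + (8*b+1) = 9*b by omega,
            show b + 9*b = 10*b by omega]
          ring
  have hpos : 0 < b^b * ((b-1)^(b-1) * 2^(8*b+1)) := by
    have p1 : 0 < b^b := pow_pos (by omega) _
    have p2 : 0 < (b-1)^(b-1) := pow_pos (by omega) _
    have p3 : 0 < 2^(8*b+1) := pow_pos (by omega) _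
    positivity
  exact Nat.le_of_mul_le_mul_right key hpos

lemma T2 (n b : ℕ) (hb1 : n+1 ≤ 2*b) (hb2 : b ≤ 2*n) :
    4^(2*n+1-b) * ((2*n).choose b * ((3*n).choose (2*n+1-b) * (2*n - b)^(33*(2*n+1-b))))
      ≤ (2*n)^(33*(2*n+1-b)) := by
  set a := 2*n+1-b with ha
  have ha1 : 1 ≤ a := by omega
  have haeq : 2*n - b = a - 1 := by omega
  rcases Nat.eq_or_lt_of_le ha1 with h1 | ha2'
  · rw [haeq, ← h1]
    simp
  have ha2 : 2 ≤ a := ha2'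
  rw [haeq]
  have hsym : (2*n).choose b = (2*n).choose (a-1) := by
    rw [← Nat.choose_symm (show a-1 ≤ 2*n by omega)]
    congr 1; omega
  have h1 : (2*n).choose (a-1) * (a-1)^(a-1) ≤ 4^(a-1) * (2*n)^(a-1) := choose_mul_pow_le _ _
  have h2 : (3*n).choose a * a^a ≤ 4^a * (3*n)^a := choose_mul_pow_le _ _
  have h3 : (a-1)^a ≤ a^a := Nat.pow_le_pow_left (by omega) _
  have h4 : ((a-1)*2)^(31*a+1) ≤ (3*n)^(31*a+1) := Nat.pow_le_pow_left (by omega) _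
  have h5 : (4^a * (4^(a-1) * 4^a)) * 3^(32*a+1) ≤ 2^(31*a+1) * 2^(32*a+1) := by
    have e1 : (4:ℕ)^(a-1) ≤ 4^a := Nat.pow_le_pow_right (by norm_num) (by omega)
    have e3 : (3:ℕ)^(32*a+1) = 3 * (3^32)^a := by
      rw [pow_add, pow_one, pow_mul, mul_comm]
    have e4 : (4:ℕ)^a * (4^a * 4^a) = (2^6)^a := by rw [← mul_pow, ← mul_pow]; norm_num
    calc (4^a * (4^(a-1) * 4^a)) * 3^(32*a+1)
        ≤ (4^a * (4^a * 4^a)) * 3^(32*a+1) :=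
          Nat.mul_le_mul (Nat.mul_le_mul le_rfl (Nat.mul_le_mul e1 le_rfl)) le_rfl
      _ = (2^6)^a * (3 * (3^32)^a) := by rw [e3, e4]
      _ ≤ (2^6)^a * (2^2 * (2^57)^a) := Nat.mul_le_mul le_rfl
          (Nat.mul_le_mul (by norm_num) (Nat.pow_le_pow_left (by norm_num) _))
      _ = 2^(6*a + (2 + 57*a)) := by rw [← pow_mul, ← pow_mul, ← pow_add, ← pow_add]
      _ ≤ 2^((31*a+1) + (32*a+1)) := Nat.pow_le_pow_right (by norm_num) (by omega)
      _ = 2^(31*a+1) * 2^(32*a+1) := pow_add 2 _ _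
  have hsplit : (a-1)^(33*a) = (a-1)^(a-1) * ((a-1)^a * (a-1)^(31*a+1)) := by
    rw [← pow_add, ← pow_add]; congr 1; omega
  have key : (4^a * ((2*n).choose b * ((3*n).choose a * (a-1)^(33*a))))
        * ((a-1)^(a-1) * (a^a * 2^(31*a+1)))
      ≤ (2*n)^(33*a) * ((a-1)^(a-1) * (a^a * 2^(31*a+1))) := by
    calc (4^a * ((2*n).choose b * ((3*n).choose a * (a-1)^(33*a))))
          * ((a-1)^(a-1) * (a^a * 2^(31*a+1)))
        = (4^a * (a-1)^(a-1)) * (((2*n).choose (a-1) * (a-1)^(a-1)) *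
            (((3*n).choose a * a^a) * ((a-1)^a * ((a-1)*2)^(31*a+1)))) := by
          rw [hsym, hsplit, mul_pow]; ring
      _ ≤ (4^a * (a-1)^(a-1)) * ((4^(a-1) * (2*n)^(a-1)) *
            ((4^a * (3*n)^a) * (a^a * (3*n)^(31*a+1)))) := by
          exact Nat.mul_le_mul le_rfl (Nat.mul_le_mul h1 (Nat.mul_le_mul h2
            (Nat.mul_le_mul h3 h4)))
      _ = ((4^a * (4^(a-1) * 4^a)) * ((3*n)^a * (3*n)^(31*a+1)))
            * ((2*n)^(a-1) * (a^a * (a-1)^(a-1))) := by ring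
      _ = ((4^a * (4^(a-1) * 4^a)) * 3^(32*a+1)) *
            ((n^(32*a+1) * (2*n)^(a-1)) * (a^a * (a-1)^(a-1))) := by
          have e5 : (3*n)^a * (3*n)^(31*a+1) = 3^(32*a+1) * n^(32*a+1) := by
            rw [← pow_add, show a + (31*a+1) = 32*a+1 by omega, mul_pow]
          rw [e5]; ring
      _ ≤ (2^(31*a+1) * 2^(32*a+1)) *
            ((n^(32*a+1) * (2*n)^(a-1)) * (a^a * (a-1)^(a-1))) :=
          Nat.mul_le_mul h5 le_rfl
      _ = (2*n)^(33*a) * ((a-1)^(a-1) * (a^a * 2^(31*a+1))) := by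
          have e6 : (2*n)^(33*a) = (2^(32*a+1) * n^(32*a+1)) * (2*n)^(a-1) := by
            rw [← mul_pow, ← pow_add, show (32*a+1) + (a-1) = 33*a by omega]
          rw [e6]; ring
  have hpos : 0 < (a-1)^(a-1) * (a^a * 2^(31*a+1)) := by
    have p1 : 0 < (a-1)^(a-1) := pow_pos (by omega) _
    have p2 : 0 < a^a := pow_pos (by omega) _
    have p3 : 0 < 2^(31*a+1) := pow_pos (by omega) _
    positivity
  exact Nat.le_of_mul_le_mul_right key hpos



lemma geom_eq (r : ℚ) (hr : 2 ≤ r) (m : ℕ) :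
    ∑ b ∈ Finset.Icc 1 m, (r^b)⁻¹ = (r-1)⁻¹ * (1 - (r^m)⁻¹) := by
  have hr0 : r ≠ 0 := by intro h; rw [h] at hr; norm_num at hr
  have hr1 : r - 1 ≠ 0 := by intro h; linarith
  induction m with
  | zero => simp
  | succ m ih =>
    rw [show m + 1 = m + 1 from rfl, Finset.sum_Icc_succ_top (by omega), ih]
    have hpm : r^m ≠ 0 := pow_ne_zero _ hr0
    field_simp
    ring
  
lemma geom_le (r : ℚ) (hr : 2 ≤ r) (m : ℕ) :
    ∑ b ∈ Finset.Icc 1 m, (r^b)⁻¹ ≤ (r-1)⁻¹ := by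
  rw [geom_eq r hr m]
  have h1 : 0 < r - 1 := by linarith
  have h2 : (0:ℚ) ≤ (r^m)⁻¹ := by positivity
  have h3 : (1 - (r^m)⁻¹) ≤ 1 := by linarith
  calc (r-1)⁻¹ * (1 - (r^m)⁻¹) ≤ (r-1)⁻¹ * 1 := by
        apply mul_le_mul_of_nonneg_left h3 (by positivity)
    _ = (r-1)⁻¹ := mul_one _

lemma card_Om : Fintype.card (Om n) = (2*n)^(99*n) * n^(20*n) := by
  rw [Fintype.card_prod, Fintype.card_fun, Fintype.card_fun]
  rw [Fintype.card_prod, Fintype.card_prod]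
  simp only [Fintype.card_fin]
  rw [show 3*n*33 = 99*n by ring, show 2*n*10 = 20*n by ring]

lemma exists_good (hn : 1 ≤ n) : ∃ ω : Om n, Good n ω := by
  classical
  set TOTN : ℕ := (2*n)^(99*n) * n^(20*n) with hTOTN
  have hTOTpos : 0 < TOTN := by
    apply Nat.mul_pos <;> exact pow_pos (by omega) _
  -- bound on Bad1 per term, in ℕ
  have hB1 : ∀ b ∈ Finset.Icc 1 (n/2),
      7^b * ((Nat.choose (2*n) b) * ((Nat.choose n (b-1)) *
        ((2*n)^(99*n) * ((b-1) ^ (10*b) * n ^ (20*n - 10*b))))) ≤ TOTN := by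
    intro b hb
    rw [Finset.mem_Icc] at hb
    have hb2 : 2*b ≤ n := by
      have := (Nat.le_div_iff_mul_le (by norm_num : 0 < 2)).1 hb.2
      omega
    have t1 := T1 n b hb.1 hb2
    calc 7^b * ((Nat.choose (2*n) b) * ((Nat.choose n (b-1)) *
            ((2*n)^(99*n) * ((b-1) ^ (10*b) * n ^ (20*n - 10*b)))))
        = ((2*n)^(99*n) * n^(20*n - 10*b)) *
            (7^b * ((Nat.choose (2*n) b) * ((Nat.choose n (b-1)) * (b-1)^(10*b)))) := by ring
      _ ≤ ((2*n)^(99*n) * n^(20*n - 10*b)) * n^(10*b) := Nat.mul_le_mul_left _ t1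
      _ = (2*n)^(99*n) * (n^(20*n - 10*b) * n^(10*b)) := by ring
      _ = TOTN := by
          rw [← pow_add, show 20*n - 10*b + 10*b = 20*n by omega]
  have hB2 : ∀ b ∈ Finset.Icc ((n+2)/2) (2*n),
      4^(2*n+1-b) * ((Nat.choose (2*n) b) * ((Nat.choose (3*n) (2*n+1-b)) *
        (((2*n - b) ^ (33 * (2*n+1-b)) * (2*n) ^ (99*n - 33*(2*n+1-b))) * n^(20*n)))) ≤ TOTN := by
    intro b hb
    rw [Finset.mem_Icc] at hb
    have hb1 : n+1 ≤ 2*b := by omega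
    have hb2 : b ≤ 2*n := hb.2
    have t2 := T2 n b hb1 hb2
    calc 4^(2*n+1-b) * ((Nat.choose (2*n) b) * ((Nat.choose (3*n) (2*n+1-b)) *
            (((2*n - b) ^ (33 * (2*n+1-b)) * (2*n) ^ (99*n - 33*(2*n+1-b))) * n^(20*n))))
        = ((2*n)^(99*n - 33*(2*n+1-b)) * n^(20*n)) *
            (4^(2*n+1-b) * ((Nat.choose (2*n) b) * ((Nat.choose (3*n) (2*n+1-b)) *
              (2*n - b)^(33*(2*n+1-b))))) := by ring
      _ ≤ ((2*n)^(99*n - 33*(2*n+1-b)) * n^(20*n)) * (2*n)^(33*(2*n+1-b)) :=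
          Nat.mul_le_mul_left _ t2
      _ = ((2*n)^(99*n - 33*(2*n+1-b)) * (2*n)^(33*(2*n+1-b))) * n^(20*n) := by ring
      _ = TOTN := by
          rw [← pow_add, show 99*n - 33*(2*n+1-b) + 33*(2*n+1-b) = 99*n by omega]
  -- to ℚ
  have q1 : ((Bad1 n).card : ℚ) ≤ (1/6 : ℚ) * TOTN := by
    have h := card_Bad1 n
    have hcast : ((Bad1 n).card : ℚ) ≤ ∑ b ∈ Finset.Icc 1 (n/2),
        ((Nat.choose (2*n) b * ((Nat.choose n (b-1)) *
          ((2*n)^(99*n) * ((b-1) ^ (10*b) * n ^ (20*n - 10*b)))) : ℕ) : ℚ) := by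
      rw [← Nat.cast_sum]
      exact_mod_cast h
    refine le_trans hcast ?_
    have hterm : ∀ b ∈ Finset.Icc 1 (n/2),
        ((Nat.choose (2*n) b * ((Nat.choose n (b-1)) *
          ((2*n)^(99*n) * ((b-1) ^ (10*b) * n ^ (20*n - 10*b)))) : ℕ) : ℚ)
          ≤ (((7:ℚ)^b)⁻¹) * TOTN := by
      intro b hb
      have h7 : (0:ℚ) < 7^b := by positivity
      have hNat := hB1 b hb
      have : ((7:ℚ)^b) * ((Nat.choose (2*n) b * ((Nat.choose n (b-1)) *
          ((2*n)^(99*n) * ((b-1) ^ (10*b) * n ^ (20*n - 10*b)))) : ℕ) : ℚ) ≤ (TOTN : ℚ) := by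
        push_cast
        exact_mod_cast (by exact_mod_cast hNat :
          ((7^b * ((Nat.choose (2*n) b) * ((Nat.choose n (b-1)) *
            ((2*n)^(99*n) * ((b-1) ^ (10*b) * n ^ (20*n - 10*b))))) :ℕ) : ℚ) ≤ (TOTN:ℚ))
      rw [le_inv_mul_iff₀ h7]
      exact this
    refine le_trans (Finset.sum_le_sum hterm) ?_
    rw [← Finset.sum_mul]
    have := geom_le 7 (by norm_num) (n/2)
    have h7 : ∑ b ∈ Finset.Icc 1 (n/2), (((7:ℚ)^b))⁻¹ ≤ (1/6 : ℚ) := by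
      refine le_trans this ?_; norm_num
    apply mul_le_mul_of_nonneg_right h7 (by positivity)
  have q2 : ((Bad2 n).card : ℚ) ≤ (1/3 : ℚ) * TOTN := by
    have h := card_Bad2 n
    have hcast : ((Bad2 n).card : ℚ) ≤ ∑ b ∈ Finset.Icc ((n+2)/2) (2*n),
        ((Nat.choose (2*n) b * ((Nat.choose (3*n) (2*n+1-b)) *
          (((2*n - b) ^ (33 * (2*n+1-b)) * (2*n) ^ (99*n - 33*(2*n+1-b))) * n^(20*n))) : ℕ) : ℚ) := by
      rw [← Nat.cast_sum]
      exact_mod_cast h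
    refine le_trans hcast ?_
    have hterm : ∀ b ∈ Finset.Icc ((n+2)/2) (2*n),
        ((Nat.choose (2*n) b * ((Nat.choose (3*n) (2*n+1-b)) *
          (((2*n - b) ^ (33 * (2*n+1-b)) * (2*n) ^ (99*n - 33*(2*n+1-b))) * n^(20*n))) : ℕ) : ℚ)
          ≤ (((4:ℚ)^(2*n+1-b))⁻¹) * TOTN := by
      intro b hb
      have h4 : (0:ℚ) < 4^(2*n+1-b) := by positivity
      have hNat := hB2 b hb
      have : ((4:ℚ)^(2*n+1-b)) * ((Nat.choose (2*n) b * ((Nat.choose (3*n) (2*n+1-b)) *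
          (((2*n - b) ^ (33 * (2*n+1-b)) * (2*n) ^ (99*n - 33*(2*n+1-b))) * n^(20*n))) : ℕ) : ℚ)
          ≤ (TOTN : ℚ) := by
        push_cast
        exact_mod_cast (by exact_mod_cast hNat :
          ((4^(2*n+1-b) * ((Nat.choose (2*n) b) * ((Nat.choose (3*n) (2*n+1-b)) *
            (((2*n - b) ^ (33 * (2*n+1-b)) * (2*n) ^ (99*n - 33*(2*n+1-b))) * n^(20*n)))) :ℕ) : ℚ)
            ≤ (TOTN:ℚ))
      rw [le_inv_mul_iff₀ h4]
      exact this
    refine le_trans (Finset.sum_le_sum hterm) ?_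
    rw [← Finset.sum_mul]
    have hre : ∑ b ∈ Finset.Icc ((n+2)/2) (2*n), ((4:ℚ)^(2*n+1-b))⁻¹
        = ∑ a ∈ Finset.Icc 1 (2*n+1-(n+2)/2), ((4:ℚ)^a)⁻¹ := by
      apply Finset.sum_nbij' (i := fun b => 2*n+1-b) (j := fun a => 2*n+1-a)
      · intro b hb; rw [Finset.mem_Icc] at *; omega
      · intro a ha; rw [Finset.mem_Icc] at *; omega
      · intro b hb; rw [Finset.mem_Icc] at hb; omega
      · intro a ha; rw [Finset.mem_Icc] at ha; omega
      · intro b hb; rfl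
    have h4sum : ∑ b ∈ Finset.Icc ((n+2)/2) (2*n), ((4:ℚ)^(2*n+1-b))⁻¹ ≤ (1/3 : ℚ) := by
      rw [hre]
      refine le_trans (geom_le 4 (by norm_num) _) (by norm_num)
    apply mul_le_mul_of_nonneg_right h4sum (by positivity)
  -- conclude
  have hcard : (Bad n).card ≤ (Bad1 n).card + (Bad2 n).card :=
    le_trans (Finset.card_le_card (Bad_subset n)) (Finset.card_union_le _ _)
  have hTOTQ : (0:ℚ) < (TOTN : ℚ) := by exact_mod_cast hTOTpos
  have hlt : ((Bad n).card : ℚ) < (TOTN : ℚ) := by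
    have : ((Bad n).card : ℚ) ≤ ((Bad1 n).card : ℚ) + ((Bad2 n).card : ℚ) := by
      exact_mod_cast hcard
    linarith
  have hltn : (Bad n).card < TOTN := by exact_mod_cast hlt
  have huniv : (univ : Finset (Om n)).card = TOTN := by
    rw [Finset.card_univ, card_Om]
  have hne : ¬ ∀ ω : Om n, ω ∈ Bad n := by
    intro hall
    have : Bad n = univ := Finset.eq_univ_iff_forall.2 hall
    rw [this, huniv] at hltn
    omega
  push_neg at hne
  obtain ⟨ω, hω⟩ := hne
  refine ⟨ω, ?_⟩
  intro S hSZ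
  by_contra hcon
  apply hω
  rw [Bad, Finset.mem_filter]
  exact ⟨Finset.mem_univ _, S, hSZ, by omega⟩


def vL (ℓ : Fin (3*n)) : Fin (10*n) := ⟨(ℓ:ℕ), by omega⟩
def pv (r : Fin (2*n)) (i : Fin 2) : Fin (10*n) := ⟨3*n + 2*(r:ℕ) + (i:ℕ), by omega⟩
def qv (j : Fin n) (i : Fin 3) : Fin (10*n) := ⟨7*n + 3*(j:ℕ) + (i:ℕ), by omega⟩

def tri (ℓ : Fin (3*n)) (r : Fin (2*n)) : Finset (Fin (10*n)) := {vL n ℓ, pv n r 0, pv n r 1}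
def qtri (j : Fin n) : Finset (Fin (10*n)) := {qv n j 0, qv n j 1, qv n j 2}

lemma tri_card (ℓ : Fin (3*n)) (r : Fin (2*n)) : (tri n ℓ r).card = 3 := by
  rw [tri, Finset.card_insert_of_notMem, Finset.card_insert_of_notMem, Finset.card_singleton]
  · simp only [Finset.mem_singleton]
    intro h
    rw [Fin.ext_iff] at h
    simp [pv] at h
  · simp only [Finset.mem_insert, Finset.mem_singleton]
    rintro (h | h) <;> rw [Fin.ext_iff] at h <;> simp [vL, pv] at h <;> omega

lemma qtri_card (j : Fin n) : (qtri n j).card = 3 := by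
  rw [qtri, Finset.card_insert_of_notMem, Finset.card_insert_of_notMem, Finset.card_singleton]
  · simp only [Finset.mem_singleton]
    intro h
    rw [Fin.ext_iff] at h
    simp [qv] at h
  · simp only [Finset.mem_insert, Finset.mem_singleton]
    rintro (h | h) <;> rw [Fin.ext_iff] at h <;> simp [qv] at h <;> omega

def E0 (ω : Om n) : Finset (Finset (Fin (10*n))) :=
  ((univ : Finset (Fin (3*n) × Fin 33)).image (fun p => tri n p.1 (ω.1 p)))
  ∪ ((univ : Finset (Fin (2*n) × Fin 10)).image
      (fun p => tri n ⟨2*n + (ω.2 p : ℕ), by omega⟩ p.1))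
  ∪ ((univ : Finset (Fin n)).image (fun j => qtri n j))

def Zset : Finset (Fin (10*n)) :=
  (univ : Finset (Fin (2*n))).image (fun i : Fin (2*n) => (⟨(i:ℕ), by omega⟩ : Fin (10*n)))

lemma Zset_card : (Zset n).card = 2*n := by
  rw [Zset, Finset.card_image_of_injective, Finset.card_univ, Fintype.card_fin]
  intro a b h
  rw [Fin.ext_iff] at h ⊢
  exact h

lemma mem_Zset_iff (v : Fin (10*n)) : v ∈ Zset n ↔ (v:ℕ) < 2*n := by
  rw [Zset, Finset.mem_image]
  constructor
  · rintro ⟨i, _, rfl⟩; exact i.isLt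
  · intro hv; exact ⟨⟨(v:ℕ), hv⟩, Finset.mem_univ _, by rw [Fin.ext_iff]⟩

lemma E0_cards (ω : Om n) : ∀ e ∈ E0 n ω, e.card = 3 := by
  intro e he
  rw [E0, Finset.mem_union, Finset.mem_union] at he
  rcases he with (he | he) | he <;> rw [Finset.mem_image] at he <;> obtain ⟨p, _, rfl⟩ := he
  · exact tri_card n _ _
  · exact tri_card n _ _
  · exact qtri_card n _

lemma E0_card_le (ω : Om n) : (E0 n ω).card ≤ 120 * n := by
  rw [E0]
  refine le_trans (Finset.card_union_le _ _) ?_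
  have h1 := Finset.card_union_le
    ((univ : Finset (Fin (3*n) × Fin 33)).image (fun p => tri n p.1 (ω.1 p)))
    ((univ : Finset (Fin (2*n) × Fin 10)).image
      (fun p => tri n ⟨2*n + (ω.2 p : ℕ), by omega⟩ p.1))
  have c1 : ((univ : Finset (Fin (3*n) × Fin 33)).image (fun p => tri n p.1 (ω.1 p))).card
      ≤ 99 * n := by
    refine le_trans (Finset.card_image_le) ?_
    rw [Finset.card_univ, Fintype.card_prod, Fintype.card_fin, Fintype.card_fin]
    omega
  have c2 : (((univ : Finset (Fin (2*n) × Fin 10)).image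
      (fun p => tri n ⟨2*n + (ω.2 p : ℕ), by omega⟩ p.1))).card ≤ 20 * n := by
    refine le_trans (Finset.card_image_le) ?_
    rw [Finset.card_univ, Fintype.card_prod, Fintype.card_fin, Fintype.card_fin]
    omega
  have c3 : ((univ : Finset (Fin n)).image (fun j => qtri n j)).card ≤ n := by
    refine le_trans (Finset.card_image_le) ?_
    rw [Finset.card_univ, Fintype.card_fin]
  omega

lemma mem_tri_iff (v : Fin (10*n)) (ℓ : Fin (3*n)) (r : Fin (2*n)) :
    v ∈ tri n ℓ r ↔ (v:ℕ) = (ℓ:ℕ) ∨ (v:ℕ) = 3*n+2*(r:ℕ) ∨ (v:ℕ) = 3*n+2*(r:ℕ)+1 := by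
  simp [tri, vL, pv, Fin.ext_iff]

lemma mem_qtri_iff (v : Fin (10*n)) (j : Fin n) :
    v ∈ qtri n j ↔ (v:ℕ) = 7*n+3*(j:ℕ) ∨ (v:ℕ) = 7*n+3*(j:ℕ)+1 ∨ (v:ℕ) = 7*n+3*(j:ℕ)+2 := by
  simp [qtri, qv, Fin.ext_iff]

lemma main (hn : 1 ≤ n) :
    ∃ E : Finset (Finset (Fin (10 * n))), ∃ Z : Finset (Fin (10 * n)),
      (∀ e ∈ E, e.card = 3) ∧ E.card = 120 * n ∧ Z.card = 2 * n ∧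
      ∀ Z' ⊆ Z, Z'.card = n →
        ∃ M ⊆ E, M.card = 3 * n ∧
          (∀ e ∈ M, ∀ v ∈ e, v ∉ Z') ∧
          (∀ e ∈ M, ∀ f ∈ M, e ≠ f → Disjoint e f) ∧
          (∀ v : Fin (10 * n), v ∉ Z' → ∃ e ∈ M, v ∈ e) := by
  classical
  obtain ⟨ω, hgood⟩ := exists_good n hn
  have hsub0 : E0 n ω ⊆ Finset.powersetCard 3 (univ : Finset (Fin (10*n))) := by
    intro e he; rw [Finset.mem_powersetCard]; exact ⟨Finset.subset_univ _, E0_cards n ω e he⟩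
  have hbig : 120 * n ≤ (Finset.powersetCard 3 (univ : Finset (Fin (10*n)))).card := by
    rw [Finset.card_powersetCard, Finset.card_univ, Fintype.card_fin]
    rw [Nat.choose_eq_descFactorial_div_factorial]
    rw [Nat.le_div_iff_mul_le (Nat.factorial_pos 3)]
    have hd : (10*n).descFactorial 3 = (10*n - 2) * ((10*n - 1) * (10*n)) := by
      simp [Nat.descFactorial]
    rw [hd, show Nat.factorial 3 = 6 from rfl]
    have e1 : 8 ≤ 10*n - 2 := by omega
    have e2 : 9 ≤ 10*n - 1 := by omega
    calc 120 * n * 6 = 72 * (10 * n) := by ring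
      _ ≤ ((10*n-2) * (10*n-1)) * (10*n) :=
          Nat.mul_le_mul (by calc 72 = 8 * 9 := by norm_num
            _ ≤ (10*n-2)*(10*n-1) := Nat.mul_le_mul e1 e2) le_rfl
      _ = (10*n - 2) * ((10*n - 1) * (10*n)) := by ring
  obtain ⟨E, hE0E, hEsub, hEcard⟩ :=
    Finset.exists_subsuperset_card_eq hsub0 (E0_card_le n ω) hbig
  refine ⟨E, Zset n, ?_, hEcard, Zset_card n, ?_⟩
  · intro e he
    have := hEsub he; rw [Finset.mem_powersetCard] at this; exact this.2
  intro Z' hZ'sub hZ'card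
  have hZ'lt : ∀ v ∈ Z', (v:ℕ) < 2*n := fun v hv => (mem_Zset_iff n v).1 (hZ'sub hv)
  set D : Finset (Fin (3*n)) := Z'.image
    (fun v : Fin (10*n) => (⟨(v:ℕ) % (3*n), Nat.mod_lt _ (by omega)⟩ : Fin (3*n))) with hD
  have hDmem : ∀ ℓ : Fin (3*n), ℓ ∈ D ↔ ∃ v ∈ Z', (v:ℕ) = (ℓ:ℕ) := by
    intro ℓ
    rw [hD, Finset.mem_image]
    constructor
    · rintro ⟨v, hv, rfl⟩
      have := hZ'lt v hv
      exact ⟨v, hv, by simp [Nat.mod_eq_of_lt (show (v:ℕ) < 3*n by omega)]⟩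
    · rintro ⟨v, hv, hveq⟩
      have := hZ'lt v hv
      exact ⟨v, hv, by
        rw [Fin.ext_iff]
        simp [Nat.mod_eq_of_lt (show (v:ℕ) < 3*n by omega)]
        omega⟩
  have hDlt : ∀ ℓ ∈ D, (ℓ:ℕ) < 2*n := by
    intro ℓ hℓ
    obtain ⟨v, hv, hveq⟩ := (hDmem ℓ).1 hℓ
    have := hZ'lt v hv; omega
  have hDcard : D.card = n := by
    rw [hD, Finset.card_image_of_injOn, hZ'card]
    intro a ha b hb hab
    rw [Fin.ext_iff] at hab ⊢
    have h1 := hZ'lt a ha; have h2 := hZ'lt b hb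
    simp only at hab
    rw [Nat.mod_eq_of_lt (by omega), Nat.mod_eq_of_lt (by omega)] at hab
    exact hab
  have hall : ∀ s : Finset {ℓ : Fin (3*n) // ℓ ∉ D},
      s.card ≤ (s.biUnion (fun ℓ => univ.filter (fun r => adj n ω ℓ.val r))).card := by
    intro s
    set S : Finset (Fin (3*n)) := s.image Subtype.val with hS
    have hScard : S.card = s.card := Finset.card_image_of_injective _ Subtype.val_injective
    have hSZ : (S.filter (fun ℓ : Fin (3*n) => (ℓ:ℕ) < 2*n)).card ≤ n := by
      have hDsub : D ⊆ (univ : Finset (Fin (3*n))).filter (fun ℓ : Fin (3*n) => (ℓ:ℕ) < 2*n) := by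
        intro ℓ hℓ; rw [Finset.mem_filter]; exact ⟨Finset.mem_univ _, hDlt ℓ hℓ⟩
      have hsub : S.filter (fun ℓ : Fin (3*n) => (ℓ:ℕ) < 2*n)
          ⊆ ((univ : Finset (Fin (3*n))).filter (fun ℓ : Fin (3*n) => (ℓ:ℕ) < 2*n)) \ D := by
        intro ℓ hℓ
        rw [Finset.mem_filter] at hℓ
        rw [Finset.mem_sdiff, Finset.mem_filter]
        refine ⟨⟨Finset.mem_univ _, hℓ.2⟩, ?_⟩
        obtain ⟨x, _, rfl⟩ := Finset.mem_image.1 hℓ.1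
        exact x.2
      refine le_trans (Finset.card_le_card hsub) ?_
      rw [Finset.card_sdiff_of_subset hDsub, card_filter_val_lt (3*n) (2*n) (by omega), hDcard]
      omega
    have hbiu : s.biUnion (fun ℓ => univ.filter (fun r => adj n ω ℓ.val r)) = nbr n ω S := by
      ext r
      rw [Finset.mem_biUnion, nbr, Finset.mem_filter]
      constructor
      · rintro ⟨ℓ, hℓ, hr⟩
        rw [Finset.mem_filter] at hr
        exact ⟨Finset.mem_univ _, ℓ.val, Finset.mem_image_of_mem _ hℓ, hr.2⟩
      · rintro ⟨-, ℓ, hℓS, hadj⟩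
        obtain ⟨x, hx, rfl⟩ := Finset.mem_image.1 hℓS
        exact ⟨x, hx, by rw [Finset.mem_filter]; exact ⟨Finset.mem_univ _, hadj⟩⟩
    rw [hbiu, ← hScard]
    exact hgood S hSZ
  obtain ⟨f, hfinj, hft⟩ := (Finset.all_card_le_biUnion_card_iff_exists_injective
    (fun ℓ : {ℓ : Fin (3*n) // ℓ ∉ D} => univ.filter (fun r => adj n ω ℓ.val r))).1 hall
  have hfadj : ∀ x, adj n ω x.val (f x) := by
    intro x; have := hft x; rw [Finset.mem_filter] at this; exact this.2
  have hcardι : Fintype.card {ℓ : Fin (3*n) // ℓ ∉ D} = 2*n := by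
    rw [Fintype.card_subtype_compl]
    rw [Fintype.card_fin]
    have hc : Fintype.card {ℓ : Fin (3*n) // ℓ ∈ D} = n :=
      (Fintype.card_of_subtype D (fun x => Iff.rfl)).trans hDcard
    rw [hc]; omega
  have hfsurj : Function.Surjective f := by
    have : Function.Bijective f := (Fintype.bijective_iff_injective_and_card f).2
      ⟨hfinj, by rw [hcardι, Fintype.card_fin]⟩
    exact this.2
  set M : Finset (Finset (Fin (10*n))) :=
    ((univ : Finset {ℓ : Fin (3*n) // ℓ ∉ D}).image (fun x => tri n x.val (f x)))
    ∪ ((univ : Finset (Fin n)).image (fun j => qtri n j)) with hM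
  have hMcases : ∀ e ∈ M, (∃ x, e = tri n x.val (f x)) ∨ (∃ j : Fin n, e = qtri n j) := by
    intro e he
    rw [hM, Finset.mem_union] at he
    rcases he with he | he <;> rw [Finset.mem_image] at he <;> obtain ⟨x, _, rfl⟩ := he
    · exact Or.inl ⟨x, rfl⟩
    · exact Or.inr ⟨x, rfl⟩
  refine ⟨M, ?_, ?_, ?_, ?_, ?_⟩
  · -- M ⊆ E
    intro e he
    rcases hMcases e he with ⟨x, rfl⟩ | ⟨j, rfl⟩
    · apply hE0E
      rw [E0, Finset.mem_union, Finset.mem_union]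
      rcases hfadj x with ⟨k, hk⟩ | ⟨k, hk⟩
      · refine Or.inl (Or.inl ?_)
        rw [Finset.mem_image]
        exact ⟨(x.val, k), Finset.mem_univ _, by rw [hk]⟩
      · refine Or.inl (Or.inr ?_)
        rw [Finset.mem_image]
        refine ⟨(f x, k), Finset.mem_univ _, ?_⟩
        have hx : (⟨2*n + (ω.2 (f x, k) : ℕ), by omega⟩ : Fin (3*n)) = x.val := by
          rw [Fin.ext_iff]; exact hk.symm
        rw [hx]
    · apply hE0E
      rw [E0, Finset.mem_union]
      exact Or.inr (by rw [Finset.mem_image]; exact ⟨j, Finset.mem_univ _, rfl⟩)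
  · -- card M = 3n
    have hdisj : Disjoint
        ((univ : Finset {ℓ : Fin (3*n) // ℓ ∉ D}).image (fun x => tri n x.val (f x)))
        ((univ : Finset (Fin n)).image (fun j => qtri n j)) := by
      rw [Finset.disjoint_left]
      rintro e he1 he2
      rw [Finset.mem_image] at he1 he2
      obtain ⟨x, _, rfl⟩ := he1
      obtain ⟨j, _, hj⟩ := he2
      have h1 : vL n x.val ∈ tri n x.val (f x) := (mem_tri_iff n _ _ _).2 (Or.inl rfl)
      rw [← hj] at h1
      rw [mem_qtri_iff] at h1
      have := x.val.isLt
      simp only [vL] at h1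
      omega
    have hinj1 : Function.Injective (fun x : {ℓ : Fin (3*n) // ℓ ∉ D} => tri n x.val (f x)) := by
      intro a b h
      have h' : tri n a.val (f a) = tri n b.val (f b) := h
      have h1 : vL n a.val ∈ tri n b.val (f b) := by
        rw [← h']; exact (mem_tri_iff n _ _ _).2 (Or.inl rfl)
      rw [mem_tri_iff] at h1
      have := a.val.isLt
      simp only [vL] at h1
      have hval : (a.val : ℕ) = (b.val : ℕ) := by omega
      exact Subtype.ext (Fin.ext hval)
    have hinj2 : Function.Injective (fun j : Fin n => qtri n j) := by
      intro a b h
      have h' : qtri n a = qtri n b := h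
      have h1 : qv n a 0 ∈ qtri n b := by
        rw [← h']; exact (mem_qtri_iff n _ _).2 (Or.inl (by simp [qv]))
      rw [mem_qtri_iff] at h1
      simp only [qv] at h1
      refine Fin.ext ?_
      omega
    rw [hM, Finset.card_union_of_disjoint hdisj,
      Finset.card_image_of_injective _ hinj1, Finset.card_image_of_injective _ hinj2,
      Finset.card_univ, Finset.card_univ, hcardι, Fintype.card_fin]
    omega
  · -- avoid Z'
    intro e he v hv hvZ'
    have hvlt := hZ'lt v hvZ'
    rcases hMcases e he with ⟨x, rfl⟩ | ⟨j, rfl⟩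
    · rw [mem_tri_iff] at hv
      have hr := (f x).isLt
      rcases hv with hv | hv | hv
      · exact x.2 ((hDmem x.val).2 ⟨v, hvZ', hv⟩)
      · omega
      · omega
    · rw [mem_qtri_iff] at hv
      omega
  · -- pairwise disjoint
    intro e he e' he' hne
    rcases hMcases e he with ⟨x, rfl⟩ | ⟨j, rfl⟩ <;>
      rcases hMcases e' he' with ⟨y, rfl⟩ | ⟨j', rfl⟩
    · have hxy : x ≠ y := fun h => hne (by rw [h])
      have hv1 : (x.val : ℕ) ≠ (y.val : ℕ) := fun h => hxy (Subtype.ext (Fin.ext h))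
      have hv2 : ((f x) : ℕ) ≠ ((f y) : ℕ) := by
        intro h
        exact hxy (hfinj (Fin.ext h))
      rw [Finset.disjoint_left]
      intro v hv hv'
      rw [mem_tri_iff] at hv hv'
      omega
    · rw [Finset.disjoint_left]
      intro v hv hv'
      rw [mem_tri_iff] at hv
      rw [mem_qtri_iff] at hv'
      have := x.val.isLt
      have := (f x).isLt
      have := j'.isLt
      omega
    · rw [Finset.disjoint_left]
      intro v hv hv'
      rw [mem_qtri_iff] at hv
      rw [mem_tri_iff] at hv'
      have := y.val.isLt
      have := (f y).isLt
      have := j.isLt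
      omega
    · have hj : j ≠ j' := fun h => hne (by rw [h])
      have hv1 : (j : ℕ) ≠ (j' : ℕ) := fun h => hj (Fin.ext h)
      rw [Finset.disjoint_left]
      intro v hv hv'
      rw [mem_qtri_iff] at hv hv'
      omega
  · -- coverage
    intro v hv
    by_cases h3 : (v:ℕ) < 3*n
    · have hnotD : (⟨(v:ℕ), h3⟩ : Fin (3*n)) ∉ D := by
        intro hmem
        obtain ⟨w, hw, hweq⟩ := (hDmem _).1 hmem
        have : w = v := by rw [Fin.ext_iff]; exact hweq
        exact hv (this ▸ hw)
      refine ⟨tri n (⟨(v:ℕ), h3⟩ : Fin (3*n)) (f ⟨⟨(v:ℕ), h3⟩, hnotD⟩), ?_, ?_⟩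
      · rw [hM, Finset.mem_union]
        refine Or.inl ?_
        rw [Finset.mem_image]
        exact ⟨⟨⟨(v:ℕ), h3⟩, hnotD⟩, Finset.mem_univ _, rfl⟩
      · exact (mem_tri_iff n _ _ _).2 (Or.inl rfl)
    by_cases h7 : (v:ℕ) < 7*n
    · have hrlt : ((v:ℕ) - 3*n)/2 < 2*n := by omega
      obtain ⟨x, hx⟩ := hfsurj ⟨((v:ℕ) - 3*n)/2, hrlt⟩
      refine ⟨tri n x.val (f x), ?_, ?_⟩
      · rw [hM, Finset.mem_union]
        exact Or.inl (by rw [Finset.mem_image]; exact ⟨x, Finset.mem_univ _, rfl⟩)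
      · rw [mem_tri_iff, hx]
        simp only
        omega
    · have hjlt : ((v:ℕ) - 7*n)/3 < n := by omega
      refine ⟨qtri n ⟨((v:ℕ) - 7*n)/3, hjlt⟩, ?_, ?_⟩
      · rw [hM, Finset.mem_union]
        exact Or.inr (by rw [Finset.mem_image]; exact ⟨_, Finset.mem_univ _, rfl⟩)
      · rw [mem_qtri_iff]
        simp only
        omega

end RT

/-- Existence of resilient templates: a 3-uniform hypergraph on `10n` vertices with
`120n` hyperedges and a flexible set `Z` of `2n` vertices such that after the removal
of any `n` vertices of `Z`, the remaining `9n` vertices are perfectly matchable. -/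
theorem resilient_template_exists :
    ∃ n₀ : ℕ, ∀ n : ℕ, n₀ ≤ n →
    ∃ E : Finset (Finset (Fin (10 * n))), ∃ Z : Finset (Fin (10 * n)),
      (∀ e ∈ E, e.card = 3) ∧ E.card = 120 * n ∧ Z.card = 2 * n ∧
      ∀ Z' ⊆ Z, Z'.card = n →
        ∃ M ⊆ E, M.card = 3 * n ∧
          (∀ e ∈ M, ∀ v ∈ e, v ∉ Z') ∧
          (∀ e ∈ M, ∀ f ∈ M, e ≠ f → Disjoint e f) ∧
          (∀ v : Fin (10 * n), v ∉ Z' → ∃ e ∈ M, v ∈ e) := by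
  exact ⟨1, fun n hn => RT.main n hn⟩
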